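/- Let $p > 1$ and let $f : \mathbb{R} \to \mathbb{R}$ be continuous with $f(0) = 0$ such that $s \mapsto f(s)/|s|^{p-1}$ is strictly increasing on $(-\infty,0) \cup (0,\infty)$. Let $F(t) = \int_0^t f(s)\,ds$. Then for all $s \in \mathbb{R}$, $f(s)\,s \geq p\,F(s)$. -/

import Mathlib

lemma aux3 (p : ℝ) (hp : 1 < p) (f : ℝ → ℝ) (hf : Continuous f) (hf0 : f 0 = 0)
    (hmono : StrictMonoOn (fun s => f s / |s| ^ (p - 1)) {s : ℝ | s ≠ 0})
    (s : ℝ) (hs : 0 < s) : p * ∫ t in (0:ℝ)..s, f t ≤ f s * s := by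
  have hp0 : (0:ℝ) < p - 1 := by linarith
  have hsp : (0:ℝ) < s ^ (p - 1) := Real.rpow_pos_of_pos hs _
  set c := f s / s ^ (p - 1) with hc
  have hcont : Continuous fun t : ℝ => c * t ^ (p - 1) :=
    continuous_const.mul (continuous_id.rpow_const fun x => Or.inr hp0.le)
  have hint : ∫ t in (0:ℝ)..s, f t ≤ ∫ t in (0:ℝ)..s, c * t ^ (p - 1) := by
    apply intervalIntegral.integral_mono_on hs.le (hf.intervalIntegrable _ _)
      (hcont.intervalIntegrable _ _)
    intro t ht
    rcases ht with ⟨ht0, hts⟩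
    rcases eq_or_lt_of_le ht0 with h0 | h0
    · simp [← h0, hf0, Real.zero_rpow hp0.ne']
    rcases eq_or_lt_of_le hts with hse | hse
    · rw [hse, hc, div_mul_cancel₀ _ hsp.ne']
    · have key := hmono (a := t) (b := s) h0.ne' hs.ne' hse
      simp only [abs_of_pos h0, abs_of_pos hs] at key
      have := (div_lt_iff₀ (Real.rpow_pos_of_pos h0 (p-1))).mp key
      linarith
  have hval : ∫ t in (0:ℝ)..s, c * t ^ (p - 1) = c * (s ^ p / p) := by
    rw [intervalIntegral.integral_const_mul]
    rw [integral_rpow (Or.inl (by linarith))]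
    rw [Real.zero_rpow (by linarith : p - 1 + 1 ≠ 0)]
    ring_nf
  have hsp' : s ^ p = s ^ (p - 1) * s := by
    have hpe : p - 1 + 1 = p := by ring
    have h := Real.rpow_add_one hs.ne' (p - 1)
    rwa [hpe] at h
  have : p * ∫ t in (0:ℝ)..s, f t ≤ p * (c * (s ^ p / p)) := by
    rw [← hval]; exact mul_le_mul_of_nonneg_left hint (by linarith)
  calc p * ∫ t in (0:ℝ)..s, f t ≤ p * (c * (s ^ p / p)) := this
    _ = c * s ^ p := by field_simp
    _ = f s * s := by rw [hc, hsp']; field_simp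

theorem stmt3 (p : ℝ) (hp : 1 < p) (f : ℝ → ℝ) (hf : Continuous f) (hf0 : f 0 = 0)
    (hmono : StrictMonoOn (fun s => f s / |s| ^ (p - 1)) {s : ℝ | s ≠ 0}) :
    ∀ s : ℝ, p * ∫ t in (0:ℝ)..s, f t ≤ f s * s := by
  intro s
  rcases lt_trichotomy s 0 with hs | hs | hs
  · -- reflect: apply aux3 to g t = -f (-t)
    set g : ℝ → ℝ := fun t => -f (-t) with hg
    have hgc : Continuous g := (hf.comp continuous_neg).neg
    have hg0 : g 0 = 0 := by simp [hg, hf0]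
    have hgm : StrictMonoOn (fun s => g s / |s| ^ (p - 1)) {s : ℝ | s ≠ 0} := by
      intro a ha b hb hab
      have hna : -a ≠ 0 := neg_ne_zero.mpr ha
      have hnb : -b ≠ 0 := neg_ne_zero.mpr hb
      have := hmono (a := -b) (b := -a) hnb hna (by linarith)
      simp only [abs_neg] at this
      simp only [hg, neg_div]
      linarith
    have key := aux3 p hp g hgc hg0 hgm (-s) (by linarith)
    have hint : ∫ t in (0:ℝ)..(-s), g t = ∫ t in (0:ℝ)..s, f t := by
      rw [hg]
      rw [intervalIntegral.integral_neg]
      have : ∫ t in (0:ℝ)..(-s), f (-t) = ∫ t in s..(0:ℝ), f t := by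
        simpa using intervalIntegral.integral_comp_neg (a := 0) (b := -s) f
      rw [this, intervalIntegral.integral_symm]
      ring
    rw [hint] at key
    have : g (-s) * (-s) = f s * s := by simp only [hg, neg_neg]; ring
    linarith [key, this.symm ▸ key]
  · simp [hs, hf0]
  · exact aux3 p hp f hf hf0 hmono s hs
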